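/- With the same recurrence (a_1 = 1, parameters A ≠ 0, B), one has a_4 = -B·(B² + 3·B + 20)/(1290240·A³). -/

import Mathlib

theorem a4_value (A B : ℝ) (hA : A ≠ 0) (a : ℕ → ℝ)
    (h1 : a 1 = 1)
    (hrec : ∀ n : ℕ, 2 ≤ n →
      a n = -(1 / (8 * A * (n : ℝ) * (2 * (n : ℝ) - 1) * ((n : ℝ) - 1))) *
        ∑ k ∈ Finset.Icc 1 (n - 1), a (n - k) *
          ((k : ℝ) * ((6 - B) * (k : ℝ) - 2 - (2 - B) * (n : ℝ)) * a k +
            8 * A * ((k : ℝ) + 1) * ((n : ℝ) - (k : ℝ)) * (2 * (n : ℝ) - 2 * (k : ℝ) - 1) *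
              ((n : ℝ) - (k : ℝ) - 1) * a (k + 1))) :
    a 4 = -B * (B ^ 2 + 3 * B + 20) / (1290240 * A ^ 3) := by
  have h2 := hrec 2 (by norm_num)
  have h3 := hrec 3 (by norm_num)
  have h4 := hrec 4 (by norm_num)
  norm_num [show (Finset.Icc 1 1 : Finset ℕ) = {1} from rfl,
    show (Finset.Icc 1 2 : Finset ℕ) = {1, 2} from rfl,
    show (Finset.Icc 1 3 : Finset ℕ) = {1, 2, 3} from rfl,
    Finset.sum_insert, Finset.mem_insert, h1] at h2 h3 h4
  rw [h2] at h3
  rw [h2, h3] at h4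
  rw [h4]
  field_simp
  ring
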